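/- If G is a graph containing a cycle and g(G) denotes its girth, then L_1(G) ≥ ⌊g(G)/3⌋. -/

import Mathlib

open Finset

/-- `B` is a `k`-limited packing in `G`: every closed neighbourhood contains
at most `k` vertices of `B`. -/
def limPack {V : Type*} [Fintype V] [DecidableEq V] (G : SimpleGraph V)
    [DecidableRel G.Adj] (k : ℕ) (B : Finset V) : Prop :=
  ∀ v : V, (insert v (G.neighborFinset v) ∩ B).card ≤ k

/-- The `k`-limited packing number `L_k(G)`. -/
noncomputable def limPackNum {V : Type*} [Fintype V] [DecidableEq V] (G : SimpleGraph V)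
    [DecidableRel G.Adj] (k : ℕ) : ℕ :=
  sSup {n | ∃ B : Finset V, limPack G k B ∧ B.card = n}

namespace SimpleGraph.Walk

variable {V : Type*} {G : SimpleGraph V}

/-- Initial segment of a walk with `n` darts. -/
def take' {u v : V} : (p : G.Walk u v) → (n : ℕ) → G.Walk u (p.getVert n)
  | nil, _ => nil
  | cons _ _, 0 => nil
  | cons h p, (n + 1) => cons h (take' p n)

/-- Final segment of a walk after removing the first `n` darts. -/
def drop' {u v : V} : (p : G.Walk u v) → (n : ℕ) → G.Walk (p.getVert n) v
  | nil, _ => nil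
  | cons h p, 0 => cons h p
  | cons _ p, (n + 1) => drop' p n

lemma length_take' {u v : V} : (p : G.Walk u v) → (n : ℕ) →
    (p.take' n).length = min n p.length
  | nil, n => by simp [take']
  | cons h p, 0 => by simp [take']; rfl
  | cons h p, (n + 1) => by
      simp [take', length_take' p n, Nat.succ_min_succ]

lemma support_take' {u v : V} : (p : G.Walk u v) → (n : ℕ) →
    (p.take' n).support = p.support.take (n + 1)
  | nil, n => by simp [take']
  | cons h p, 0 => by simp [take']; rfl
  | cons h p, (n + 1) => by
      simp [take', support_take' p n]

lemma getVert_drop' {u v : V} : (p : G.Walk u v) → (n m : ℕ) →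
    (p.drop' n).getVert m = p.getVert (n + m)
  | nil, n, m => by simp [drop', getVert]
  | cons h p, 0, m => by simp [drop']; rfl
  | cons h p, (n + 1), m => by
      show (p.drop' n).getVert m = (cons h p).getVert (n + 1 + m)
      have h2 : n + 1 + m = (n + m) + 1 := by omega
      rw [h2, getVert_cons_succ, getVert_drop' p n m]

lemma length_drop' {u v : V} : (p : G.Walk u v) → (n : ℕ) →
    (p.drop' n).length = p.length - n
  | nil, n => by simp [drop']
  | cons h p, 0 => by simp [drop']; rfl
  | cons h p, (n + 1) => by
      simp [drop', length_drop' p n]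

lemma support_drop' {u v : V} : (p : G.Walk u v) → (n : ℕ) → (hn : n ≤ p.length) →
    (p.drop' n).support = p.support.drop n
  | nil, n, hn => by
      simp at hn; simp [hn, drop']
  | cons h p, 0, _ => by simp [drop']; rfl
  | cons h p, (n + 1), hn => by
      rw [drop']; refine (support_drop' p n (by simpa using hn)).trans ?_
      simp

/-- A path from `u` to `u` has length `0`. -/
lemma IsPath.length_eq_zero {u : V} {p : G.Walk u u} (hp : p.IsPath) : p.length = 0 := by
  cases p with
  | nil => rfl
  | cons h q =>
      rw [cons_isPath_iff] at hp
      exact absurd q.end_mem_support hp.2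

/-- For a cycle, the initial part of the support (without the final repeated vertex)
has no duplicates. -/
lemma IsCycle.dropLast_support_nodup {a : V} {c : G.Walk a a} (hc : c.IsCycle) :
    c.support.dropLast.Nodup := by
  have h1 : c.support = a :: c.support.tail := c.support_eq_cons
  have hlen : c.support.tail.length = c.length := by
    rw [List.length_tail, c.length_support]
    omega
  have htne : c.support.tail ≠ [] := by
    intro h
    rw [h] at hlen
    have := hc.three_le_length
    simp at hlen
    omega
  have hglast : c.support.getLast? = some a := by
    rw [List.getLast?_eq_getLast c.support_ne_nil, c.getLast_support]
  obtain ⟨b, t', ht'⟩ := List.exists_cons_of_ne_nil htne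
  have hlast? : c.support.tail.getLast? = some a := by
    rw [h1, ht', List.getLast?_cons_cons] at hglast
    rw [ht']
    exact hglast
  have hsplit : c.support.tail.dropLast ++ [a] = c.support.tail :=
    List.dropLast_append_getLast? a (Option.mem_def.mpr hlast?)
  have hnd : c.support.tail.Nodup := hc.support_nodup
  have hnotmem : a ∉ c.support.tail.dropLast := by
    intro hmem
    rw [← hsplit, List.nodup_append] at hnd
    exact hnd.2.2 a hmem a (by simp) rfl
  rw [h1, List.dropLast_cons_of_ne_nil htne]
  exact List.nodup_cons.mpr ⟨hnotmem, hnd.sublist (List.dropLast_sublist _)⟩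

/-- Any contiguous arc of a cycle (not wrapping around) is a path of the expected length. -/
lemma IsCycle.exists_arc {a : V} {c : G.Walk a a} (hc : c.IsCycle) {s t : ℕ}
    (hst : s ≤ t) (ht : t < c.length) :
    ∃ q : G.Walk (c.getVert s) (c.getVert t), q.IsPath ∧ q.length = t - s := by
  have hs : s ≤ c.length := le_of_lt (lt_of_le_of_lt hst ht)
  have hend : (c.drop' s).getVert (t - s) = c.getVert t := by
    rw [getVert_drop']
    congr 1
    omega
  refine ⟨((c.drop' s).take' (t - s)).copy rfl hend, ?_, ?_⟩
  · rw [isPath_copy]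
    refine IsPath.mk' ?_
    rw [support_take', support_drop' c s hs]
    have h1 : (c.support.drop s).take (t - s + 1) =
        (c.support.take (s + (t - s + 1))).drop s :=
      List.take_drop
    have h2 : c.support.take (s + (t - s + 1)) = c.support.dropLast.take (t + 1) := by
      rw [List.dropLast_eq_take, List.take_take]
      congr 1
      have := c.length_support
      omega
    rw [h1, h2]
    have t1 : List.Sublist ((c.support.dropLast.take (t + 1)).drop s)
        (c.support.dropLast.take (t + 1)) := List.drop_sublist _ _
    have t2 : List.Sublist (c.support.dropLast.take (t + 1)) c.support.dropLast :=
      List.take_sublist _ _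
    exact hc.dropLast_support_nodup.sublist (t1.trans t2)
  · rw [length_copy, length_take', length_drop']
    omega

end SimpleGraph.Walk

open SimpleGraph

/-- If there are two paths of different lengths between the same pair of vertices,
then the girth is at most the sum of their lengths. -/
lemma girth_le_two_paths {V : Type*} {G : SimpleGraph V} {u w : V}
    (p q : G.Walk u w) (hp : p.IsPath) (hq : q.IsPath) (hne : p.length ≠ q.length) :
    G.girth ≤ p.length + q.length := by
  classical
  set S : Set (Sym2 V) := {e | e ∈ p.edges ++ q.edges} with hS
  set H : SimpleGraph V := SimpleGraph.fromEdgeSet S with hH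
  have hedge : ∀ {x y : V} (r : G.Walk x y), r.IsPath → (∀ e ∈ r.edges, e ∈ S) →
      ∀ e ∈ r.edges, e ∈ H.edgeSet := by
    intro x y r hr hrS e he
    rw [hH, SimpleGraph.edgeSet_fromEdgeSet]
    exact ⟨hrS e he, SimpleGraph.not_isDiag_of_mem_edgeSet G (r.edges_subset_edgeSet he)⟩
  have hpS : ∀ e ∈ p.edges, e ∈ S := fun e he => by simp [hS, he]
  have hqS : ∀ e ∈ q.edges, e ∈ S := fun e he => by simp [hS, he]
  have hHG : H ≤ G := by
    rw [hH, ← G.fromEdgeSet_edgeSet]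
    apply SimpleGraph.fromEdgeSet_mono
    intro e he
    rcases List.mem_append.mp he with h | h
    · exact p.edges_subset_edgeSet h
    · exact q.edges_subset_edgeSet h
  set p' : H.Walk u w := p.transfer H (hedge p hp hpS) with hp'
  set q' : H.Walk u w := q.transfer H (hedge q hq hqS) with hq'
  have hp'path : p'.IsPath := hp.transfer _
  have hq'path : q'.IsPath := hq.transfer _
  have hHnac : ¬ H.IsAcyclic := by
    intro hac
    have := hac.path_unique ⟨p', hp'path⟩ ⟨q', hq'path⟩
    apply hne
    have : p' = q' := congrArg Subtype.val this
    calc p.length = p'.length := (p.length_transfer _).symm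
      _ = q'.length := by rw [this]
      _ = q.length := q.length_transfer _
  obtain ⟨b, C, hC, hlen⟩ := SimpleGraph.exists_girth_eq_length.mpr hHnac
  have h1 : G.girth ≤ H.girth := SimpleGraph.girth_anti hHG hHnac
  have h2 : List.Subperm C.edges (p.edges ++ q.edges) := by
    refine List.subperm_of_subset hC.edges_nodup ?_
    intro e he
    have := C.edges_subset_edgeSet he
    rw [hH, SimpleGraph.edgeSet_fromEdgeSet] at this
    exact this.1
  have h3 : C.length ≤ p.length + q.length := by
    have := h2.length_le
    rwa [C.length_edges, List.length_append, p.length_edges, q.length_edges] at this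
  omega

/-- Vertices of a cycle are pairwise distinct before wrapping around. -/
lemma cycle_getVert_injOn {V : Type*} {G : SimpleGraph V} {a : V} {c : G.Walk a a}
    (hc : c.IsCycle) {s t : ℕ} (hst : s < t) (ht : t < c.length) :
    c.getVert s ≠ c.getVert t := by
  intro h
  obtain ⟨q, hq, hlen⟩ := hc.exists_arc (le_of_lt hst) ht
  have : (q.copy rfl h.symm).IsPath := by rw [SimpleGraph.Walk.isPath_copy]; exact hq
  have h0 := this.length_eq_zero
  rw [SimpleGraph.Walk.length_copy] at h0
  omega

theorem stmt_7 {V : Type*} [Fintype V] [DecidableEq V] (G : SimpleGraph V)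
    [DecidableRel G.Adj] (hG : ¬ G.IsAcyclic) :
    G.girth / 3 ≤ limPackNum G 1 := by
  classical
  obtain ⟨a, c, hc, hg⟩ := SimpleGraph.exists_girth_eq_length.mpr hG
  set g : ℕ := c.length with hgdef
  have hg3 : 3 ≤ g := hc.three_le_length
  set m : ℕ := g / 3 with hm
  set f : ℕ → V := fun i => c.getVert (3 * i) with hf
  have hfinj : Set.InjOn f (Finset.range m) := by
    intro i hi j hj hij
    simp only [Finset.coe_range, Set.mem_Iio] at hi hj
    by_contra hne
    rcases Nat.lt_or_ge i j with h | h
    · exact cycle_getVert_injOn hc (by omega) (by omega) hij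
    · have h' : j < i := by omega
      exact cycle_getVert_injOn hc (by omega) (by omega) hij.symm
  set B : Finset V := (Finset.range m).image f with hB
  -- key: distinct vertices of B are at distance ≥ 3
  have hkey : ∀ i j : ℕ, i < m → j < m → i < j → ∀ (P : G.Walk (f i) (f j)),
      P.IsPath → P.length ≤ 2 → False := by
    intro i j hi hj hij P hP hP2
    have ht : 3 * j < g := by omega
    obtain ⟨Q, hQ, hQlen⟩ := hc.exists_arc (s := 3 * i) (t := 3 * j)
      (by omega) ht
    have hQ3 : 3 ≤ Q.length := by omega
    have hQg : Q.length ≤ g - 3 := by omega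
    have := girth_le_two_paths P Q hP hQ (by omega)
    rw [hg] at this
    omega
  have hpack : limPack G 1 B := by
    intro v
    rw [Finset.card_le_one]
    intro x hx y hy
    simp only [Finset.mem_inter, hB, Finset.mem_image, Finset.mem_range] at hx hy
    obtain ⟨hxN, i, hi, hix⟩ := hx
    obtain ⟨hyN, j, hj, hjy⟩ := hy
    subst hix hjy
    by_contra hne
    have hij : i ≠ j := fun h => hne (by rw [h])
    -- build a walk from f i to f j of length ≤ 2 through v
    have hwalk : ∀ i j : ℕ, i < m → j < m → i < j →
        f i ∈ insert v (G.neighborFinset v) → f j ∈ insert v (G.neighborFinset v) → False := by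
      intro i j hi hj hij hxN hyN
      simp only [Finset.mem_insert, SimpleGraph.mem_neighborFinset] at hxN hyN
      have hfij : f i ≠ f j := fun h => (by
        exact cycle_getVert_injOn hc (by omega) (by omega) h)
      rcases hxN with hx1 | hx2
      · rcases hyN with hy1 | hy2
        · exact hfij (hx1.trans hy1.symm)
        · -- f i = v, v ~ f j
          subst hx1
          exact hkey i j hi hj hij (SimpleGraph.Walk.cons hy2 SimpleGraph.Walk.nil).bypass
            (SimpleGraph.Walk.bypass_isPath _)
            (le_trans (SimpleGraph.Walk.length_bypass_le _) (by simp))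
      · rcases hyN with hy1 | hy2
        · subst hy1
          exact hkey i j hi hj hij (SimpleGraph.Walk.cons hx2.symm SimpleGraph.Walk.nil).bypass
            (SimpleGraph.Walk.bypass_isPath _)
            (le_trans (SimpleGraph.Walk.length_bypass_le _) (by simp))
        · exact hkey i j hi hj hij
            (SimpleGraph.Walk.cons hx2.symm (SimpleGraph.Walk.cons hy2
              SimpleGraph.Walk.nil)).bypass
            (SimpleGraph.Walk.bypass_isPath _)
            (le_trans (SimpleGraph.Walk.length_bypass_le _) (by simp))
    rcases Nat.lt_or_ge i j with h | h
    · exact hwalk i j hi hj h hxN hyN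
    · exact hwalk j i hj hi (by omega) hyN hxN
  have hcard : B.card = m := by
    rw [hB, Finset.card_image_of_injOn hfinj, Finset.card_range]
  have hmem : m ∈ {n | ∃ B : Finset V, limPack G 1 B ∧ B.card = n} := ⟨B, hpack, hcard⟩
  have hbdd : BddAbove {n | ∃ B : Finset V, limPack G 1 B ∧ B.card = n} := by
    refine ⟨Fintype.card V, ?_⟩
    rintro n ⟨B', _, rfl⟩
    exact Finset.card_le_univ B'
  have := le_csSup hbdd hmem
  rw [limPackNum]
  calc G.girth / 3 = m := by rw [hm, hg]
    _ ≤ _ := this
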